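/- Let G be a finite abelian group of order q, H a subgroup of G, Y a finite set, and W a channel (G, Y, W). Let U₁, U₂ be independent random variables, each uniformly distributed on G, let X₁ = U₁ + U₂ and X₂ = U₂, and let Y₁, Y₂ be outputs of W with inputs X₁, X₂ respectively, conditionally independent given (X₁, X₂); that is, the joint pmf is p(u₁,u₂,y₁,y₂) = (1/q²)·W(y₁|u₁+u₂)·W(y₂|u₂). Let π : G → G/H denote the quotient map onto cosets of H. Then I(π(U₁); (Y₁,Y₂)) + I(π(U₂); (Y₁,Y₂,U₁)) ≥ 2·I(π(U₁+U₂); Y₁). Consequently the conditional mutual informations satisfy I(U₁; Y₁,Y₂ | π(U₁)) + I(U₂; Y₁,Y₂,U₁ | π(U₂)) ≤ 2·I(X₁; Y₁ | π(X₁)); i.e., the process I^n_H(W) is a super-martingale. -/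

import Mathlib

open Finset

/-- Mutual information `I(A;B)` (base-2) of two finitely-valued random variables `A, B`
defined on a finite probability space with pmf `p`. -/
noncomputable def mutInfo {Ω α β : Type} [Fintype Ω] [Fintype α] [Fintype β]
    [DecidableEq α] [DecidableEq β]
    (p : Ω → ℝ) (A : Ω → α) (B : Ω → β) : ℝ :=
  ∑ a : α, ∑ b : β,
    (∑ ω ∈ Finset.univ.filter (fun ω => A ω = a ∧ B ω = b), p ω) *
      Real.logb 2
        ((∑ ω ∈ Finset.univ.filter (fun ω => A ω = a ∧ B ω = b), p ω) /
          ((∑ ω ∈ Finset.univ.filter (fun ω => A ω = a), p ω) *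
            (∑ ω ∈ Finset.univ.filter (fun ω => B ω = b), p ω)))

/-- Conditional mutual information `I(A;B|C)` (base-2) of finitely-valued random
variables on a finite probability space with pmf `p`. -/
noncomputable def condMutInfo {Ω α β γ : Type} [Fintype Ω] [Fintype α] [Fintype β] [Fintype γ]
    [DecidableEq α] [DecidableEq β] [DecidableEq γ]
    (p : Ω → ℝ) (A : Ω → α) (B : Ω → β) (C : Ω → γ) : ℝ :=
  ∑ a : α, ∑ b : β, ∑ c : γ,
    (∑ ω ∈ Finset.univ.filter (fun ω => A ω = a ∧ B ω = b ∧ C ω = c), p ω) *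
      Real.logb 2
        (((∑ ω ∈ Finset.univ.filter (fun ω => C ω = c), p ω) *
            (∑ ω ∈ Finset.univ.filter (fun ω => A ω = a ∧ B ω = b ∧ C ω = c), p ω)) /
          ((∑ ω ∈ Finset.univ.filter (fun ω => A ω = a ∧ C ω = c), p ω) *
            (∑ ω ∈ Finset.univ.filter (fun ω => B ω = b ∧ C ω = c), p ω)))

set_option linter.unusedSectionVars false
set_option linter.unusedVariables false
namespace ITAux
open Real

variable {Ω α β γ : Type} [Fintype Ω] [Fintype α] [Fintype β] [Fintype γ]
  [DecidableEq α] [DecidableEq β] [DecidableEq γ]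

noncomputable def m1 (p : Ω → ℝ) (A : Ω → α) (a : α) : ℝ :=
  ∑ ω ∈ Finset.univ.filter (fun ω => A ω = a), p ω

noncomputable def m2 (p : Ω → ℝ) (A : Ω → α) (B : Ω → β) (a : α) (b : β) : ℝ :=
  ∑ ω ∈ Finset.univ.filter (fun ω => A ω = a ∧ B ω = b), p ω

noncomputable def m3 (p : Ω → ℝ) (A : Ω → α) (B : Ω → β) (C : Ω → γ) (a : α) (b : β) (c : γ) : ℝ :=
  ∑ ω ∈ Finset.univ.filter (fun ω => A ω = a ∧ B ω = b ∧ C ω = c), p ω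

lemma mutInfo_def (p : Ω → ℝ) (A : Ω → α) (B : Ω → β) :
    mutInfo p A B = ∑ a : α, ∑ b : β,
      m2 p A B a b * Real.logb 2 (m2 p A B a b / (m1 p A a * m1 p B b)) := rfl

lemma condMutInfo_def (p : Ω → ℝ) (A : Ω → α) (B : Ω → β) (C : Ω → γ) :
    condMutInfo p A B C = ∑ a : α, ∑ b : β, ∑ c : γ,
      m3 p A B C a b c * Real.logb 2
        ((m1 p C c * m3 p A B C a b c) / (m2 p A C a c * m2 p B C b c)) := rfl

lemma filter_eq_of_iff {P Q : Ω → Prop} [DecidablePred P] [DecidablePred Q] (h : ∀ ω, P ω ↔ Q ω) :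
    Finset.univ.filter P = Finset.univ.filter Q := by
  ext ω; simp [h ω]

lemma sum_filter_le {p : Ω → ℝ} (hp0 : ∀ ω, 0 ≤ p ω) {P Q : Ω → Prop}
    [DecidablePred P] [DecidablePred Q] (h : ∀ ω, P ω → Q ω) :
    ∑ ω ∈ Finset.univ.filter P, p ω ≤ ∑ ω ∈ Finset.univ.filter Q, p ω := by
  apply Finset.sum_le_sum_of_subset_of_nonneg
  · exact Finset.monotone_filter_right _ (fun ω _ => h ω)
  · intro ω _ _; exact hp0 ω

lemma m1_nonneg {p : Ω → ℝ} (hp0 : ∀ ω, 0 ≤ p ω) (A : Ω → α) (a : α) : 0 ≤ m1 p A a :=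
  Finset.sum_nonneg fun ω _ => hp0 ω

lemma m2_nonneg {p : Ω → ℝ} (hp0 : ∀ ω, 0 ≤ p ω) (A : Ω → α) (B : Ω → β) (a : α) (b : β) :
    0 ≤ m2 p A B a b := Finset.sum_nonneg fun ω _ => hp0 ω

lemma m3_nonneg {p : Ω → ℝ} (hp0 : ∀ ω, 0 ≤ p ω) (A : Ω → α) (B : Ω → β) (C : Ω → γ)
    (a : α) (b : β) (c : γ) : 0 ≤ m3 p A B C a b c := Finset.sum_nonneg fun ω _ => hp0 ω

lemma m2_le_m1_left {p : Ω → ℝ} (hp0 : ∀ ω, 0 ≤ p ω) (A : Ω → α) (B : Ω → β) (a : α) (b : β) :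
    m2 p A B a b ≤ m1 p A a := sum_filter_le hp0 fun ω h => h.1

lemma m2_le_m1_right {p : Ω → ℝ} (hp0 : ∀ ω, 0 ≤ p ω) (A : Ω → α) (B : Ω → β) (a : α) (b : β) :
    m2 p A B a b ≤ m1 p B b := sum_filter_le hp0 fun ω h => h.2

lemma m3_le_m2_12 {p : Ω → ℝ} (hp0 : ∀ ω, 0 ≤ p ω) (A : Ω → α) (B : Ω → β) (C : Ω → γ)
    (a : α) (b : β) (c : γ) : m3 p A B C a b c ≤ m2 p A B a b :=
  sum_filter_le hp0 fun ω h => ⟨h.1, h.2.1⟩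

lemma m3_le_m2_13 {p : Ω → ℝ} (hp0 : ∀ ω, 0 ≤ p ω) (A : Ω → α) (B : Ω → β) (C : Ω → γ)
    (a : α) (b : β) (c : γ) : m3 p A B C a b c ≤ m2 p A C a c :=
  sum_filter_le hp0 fun ω h => ⟨h.1, h.2.2⟩

lemma m3_le_m2_23 {p : Ω → ℝ} (hp0 : ∀ ω, 0 ≤ p ω) (A : Ω → α) (B : Ω → β) (C : Ω → γ)
    (a : α) (b : β) (c : γ) : m3 p A B C a b c ≤ m2 p B C b c :=
  sum_filter_le hp0 fun ω h => ⟨h.2.1, h.2.2⟩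

lemma m3_le_m1_1 {p : Ω → ℝ} (hp0 : ∀ ω, 0 ≤ p ω) (A : Ω → α) (B : Ω → β) (C : Ω → γ)
    (a : α) (b : β) (c : γ) : m3 p A B C a b c ≤ m1 p A a :=
  sum_filter_le hp0 fun ω h => h.1

lemma m3_le_m1_3 {p : Ω → ℝ} (hp0 : ∀ ω, 0 ≤ p ω) (A : Ω → α) (B : Ω → β) (C : Ω → γ)
    (a : α) (b : β) (c : γ) : m3 p A B C a b c ≤ m1 p C c :=
  sum_filter_le hp0 fun ω h => h.2.2

lemma m2_comm (p : Ω → ℝ) (A : Ω → α) (B : Ω → β) (a : α) (b : β) :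
    m2 p A B a b = m2 p B A b a := by
  unfold m2; congr 1; exact filter_eq_of_iff (fun ω => and_comm)

lemma m3_comm12 (p : Ω → ℝ) (A : Ω → α) (B : Ω → β) (C : Ω → γ) (a : α) (b : β) (c : γ) :
    m3 p A B C a b c = m3 p B A C b a c := by
  unfold m3; congr 1; exact filter_eq_of_iff (fun ω => by tauto)

lemma m1_eq_sum_m2 (p : Ω → ℝ) (A : Ω → α) (B : Ω → β) (a : α) :
    m1 p A a = ∑ b : β, m2 p A B a b := by
  unfold m1 m2
  rw [← Finset.sum_fiberwise (Finset.univ.filter (fun ω => A ω = a)) B p]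
  refine Finset.sum_congr rfl fun b _ => ?_
  rw [Finset.filter_filter]

lemma m2_eq_sum_m3 (p : Ω → ℝ) (A : Ω → α) (B : Ω → β) (C : Ω → γ) (a : α) (b : β) :
    m2 p A B a b = ∑ c : γ, m3 p A B C a b c := by
  unfold m2 m3
  rw [← Finset.sum_fiberwise (Finset.univ.filter (fun ω => A ω = a ∧ B ω = b)) C p]
  refine Finset.sum_congr rfl fun c _ => ?_
  rw [Finset.filter_filter]
  congr 1
  exact filter_eq_of_iff (fun ω => by tauto)

lemma m2_eq_sum_m3_13 (p : Ω → ℝ) (A : Ω → α) (B : Ω → β) (C : Ω → γ) (a : α) (c : γ) :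
    m2 p A C a c = ∑ b : β, m3 p A B C a b c := by
  unfold m2 m3
  rw [← Finset.sum_fiberwise (Finset.univ.filter (fun ω => A ω = a ∧ C ω = c)) B p]
  refine Finset.sum_congr rfl fun b _ => ?_
  rw [Finset.filter_filter]
  congr 1
  exact filter_eq_of_iff (fun ω => by tauto)

lemma m2_eq_sum_m3_23 (p : Ω → ℝ) (A : Ω → α) (B : Ω → β) (C : Ω → γ) (b : β) (c : γ) :
    m2 p B C b c = ∑ a : α, m3 p A B C a b c := by
  unfold m2 m3
  rw [← Finset.sum_fiberwise (Finset.univ.filter (fun ω => B ω = b ∧ C ω = c)) A p]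
  refine Finset.sum_congr rfl fun a _ => ?_
  rw [Finset.filter_filter]
  congr 1
  exact filter_eq_of_iff (fun ω => by tauto)

lemma sum_m1 (p : Ω → ℝ) (A : Ω → α) : ∑ a : α, m1 p A a = ∑ ω, p ω := by
  unfold m1
  exact Finset.sum_fiberwise Finset.univ A p

end ITAux

-- ===== chunk 2 =====
namespace ITAux
open Real
set_option linter.unusedSectionVars false
set_option linter.unusedVariables false

variable {Ω α β γ : Type} [Fintype Ω] [Fintype α] [Fintype β] [Fintype γ]
  [DecidableEq α] [DecidableEq β] [DecidableEq γ]

lemma mutInfo_symm (p : Ω → ℝ) (A : Ω → α) (B : Ω → β) :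
    mutInfo p A B = mutInfo p B A := by
  rw [mutInfo_def, mutInfo_def, Finset.sum_comm]
  refine Finset.sum_congr rfl fun b _ => Finset.sum_congr rfl fun a _ => ?_
  rw [m2_comm p A B a b, mul_comm (m1 p A a)]

lemma condMutInfo_comm (p : Ω → ℝ) (A : Ω → α) (B : Ω → β) (C : Ω → γ) :
    condMutInfo p A B C = condMutInfo p B A C := by
  rw [condMutInfo_def, condMutInfo_def, Finset.sum_comm]
  refine Finset.sum_congr rfl fun b _ => Finset.sum_congr rfl fun a _ =>
    Finset.sum_congr rfl fun c _ => ?_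
  rw [m3_comm12 p A B C a b c, mul_comm (m2 p A C a c)]

lemma swap3 (f : α → β → γ → ℝ) :
    (∑ b : β, ∑ c : γ, ∑ a : α, f a b c) = ∑ a : α, ∑ b : β, ∑ c : γ, f a b c := by
  calc (∑ b : β, ∑ c : γ, ∑ a : α, f a b c)
      = ∑ b : β, ∑ a : α, ∑ c : γ, f a b c :=
        Finset.sum_congr rfl fun b _ => Finset.sum_comm
    _ = ∑ a : α, ∑ b : β, ∑ c : γ, f a b c := Finset.sum_comm

/-- key scalar combination lemma for the chain rule -/
lemma log_combine {t pa pc pab pac : ℝ} (ht : 0 < t) (hpa : t ≤ pa) (hpc : t ≤ pc)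
    (hpab : t ≤ pab) (hpac : t ≤ pac) :
    Real.logb 2 (pac / (pa * pc)) + Real.logb 2 ((pa * t) / (pab * pac)) =
      Real.logb 2 (t / (pab * pc)) := by
  have h1 : (0:ℝ) < pa := lt_of_lt_of_le ht hpa
  have h2 : (0:ℝ) < pc := lt_of_lt_of_le ht hpc
  have h3 : (0:ℝ) < pab := lt_of_lt_of_le ht hpab
  have h4 : (0:ℝ) < pac := lt_of_lt_of_le ht hpac
  rw [← Real.logb_mul (by positivity) (by positivity)]
  congr 1
  field_simp

/-- Chain rule: `I((A,B);C) = I(A;C) + I(B;C|A)` -/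
lemma chain (p : Ω → ℝ) (hp0 : ∀ ω, 0 ≤ p ω) (A : Ω → α) (B : Ω → β) (C : Ω → γ) :
    mutInfo p (fun ω => (A ω, B ω)) C = mutInfo p A C + condMutInfo p B C A := by
  have hm2 : ∀ (a : α) (b : β) (c : γ),
      m2 p (fun ω => (A ω, B ω)) C (a, b) c = m3 p A B C a b c := by
    intro a b c; unfold m2 m3; congr 1
    exact filter_eq_of_iff (fun ω => by simp [Prod.ext_iff]; tauto)
  have hm1 : ∀ (a : α) (b : β),
      m1 p (fun ω => (A ω, B ω)) (a, b) = m2 p A B a b := by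
    intro a b; unfold m1 m2; congr 1
    exact filter_eq_of_iff (fun ω => by simp [Prod.ext_iff])
  have h2ba : ∀ (b : β) (a : α), m2 p B A b a = m2 p A B a b :=
    fun b a => (m2_comm p A B a b).symm
  have h2ca : ∀ (c : γ) (a : α), m2 p C A c a = m2 p A C a c :=
    fun c a => (m2_comm p A C a c).symm
  have h3rot : ∀ (b : β) (c : γ) (a : α), m3 p B C A b c a = m3 p A B C a b c := by
    intro b c a; unfold m3; congr 1
    exact filter_eq_of_iff (fun ω => by tauto)
  have hL : mutInfo p (fun ω => (A ω, B ω)) C =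
      ∑ a : α, ∑ b : β, ∑ c : γ, m3 p A B C a b c *
        Real.logb 2 (m3 p A B C a b c / (m2 p A B a b * m1 p C c)) := by
    rw [mutInfo_def, Fintype.sum_prod_type]
    simp only [hm2, hm1]
  have hR2 : condMutInfo p B C A =
      ∑ a : α, ∑ b : β, ∑ c : γ, m3 p A B C a b c *
        Real.logb 2 ((m1 p A a * m3 p A B C a b c) / (m2 p A B a b * m2 p A C a c)) := by
    rw [condMutInfo_def]
    simp only [h2ba, h2ca, h3rot]
    exact swap3 _
  have hR1 : mutInfo p A C =
      ∑ a : α, ∑ b : β, ∑ c : γ, m3 p A B C a b c *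
        Real.logb 2 (m2 p A C a c / (m1 p A a * m1 p C c)) := by
    rw [mutInfo_def]
    refine Finset.sum_congr rfl fun a _ => ?_
    rw [Finset.sum_comm]
    refine Finset.sum_congr rfl fun c _ => ?_
    rw [m2_eq_sum_m3_13 p A B C a c, Finset.sum_mul]
  rw [hL, hR1, hR2, ← Finset.sum_add_distrib]
  refine Finset.sum_congr rfl fun a _ => ?_
  rw [← Finset.sum_add_distrib]
  refine Finset.sum_congr rfl fun b _ => ?_
  rw [← Finset.sum_add_distrib]
  refine Finset.sum_congr rfl fun c _ => ?_
  rcases eq_or_lt_of_le (m3_nonneg hp0 A B C a b c) with h | h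
  · rw [← h]; ring
  · rw [← mul_add, log_combine h (m3_le_m1_1 hp0 A B C a b c) (m3_le_m1_3 hp0 A B C a b c)
      (m3_le_m2_12 hp0 A B C a b c) (m3_le_m2_13 hp0 A B C a b c)]

end ITAux

-- ===== chunk 3 =====
namespace ITAux
open Real
set_option linter.unusedSectionVars false
set_option linter.unusedVariables false

variable {Ω α β γ : Type} [Fintype Ω] [Fintype α] [Fintype β] [Fintype γ]
  [DecidableEq α] [DecidableEq β] [DecidableEq γ]

lemma m1_eq_sum_m2_right (p : Ω → ℝ) (A : Ω → α) (C : Ω → γ) (c : γ) :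
    m1 p C c = ∑ a : α, m2 p A C a c := by
  rw [m1_eq_sum_m2 p C A c]
  exact Finset.sum_congr rfl fun a _ => (m2_comm p A C a c).symm

/-- Gibbs-type termwise bound (conditional form). -/
lemma gibbs_term {t mac mbc mc : ℝ} (ht : 0 ≤ t) (hac : t ≤ mac) (hbc : t ≤ mbc)
    (hmc : 0 < mc) (hac0 : 0 ≤ mac) (hbc0 : 0 ≤ mbc) :
    (t - mac * mbc / mc) / Real.log 2 ≤ t * Real.logb 2 ((mc * t) / (mac * mbc)) := by
  have hlog2 : (0:ℝ) < Real.log 2 := Real.log_pos one_lt_two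
  rcases eq_or_lt_of_le ht with h | h
  · rw [← h]
    simp only [mul_zero, zero_mul, zero_sub]
    apply div_nonpos_of_nonpos_of_nonneg _ hlog2.le
    simp only [neg_nonpos]
    positivity
  · have h1 : (0:ℝ) < mac := lt_of_lt_of_le h hac
    have h2 : (0:ℝ) < mbc := lt_of_lt_of_le h hbc
    set x : ℝ := (mc * t) / (mac * mbc) with hx
    have hxpos : 0 < x := by positivity
    have hlb : 1 - x⁻¹ ≤ Real.log x := by
      have := Real.log_le_sub_one_of_pos (x := x⁻¹) (by positivity)
      rw [Real.log_inv] at this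
      linarith
    have hxinv : t * x⁻¹ = mac * mbc / mc := by
      rw [hx]
      field_simp
    have hkey : t - mac * mbc / mc ≤ t * Real.log x := by
      have h3 : t * (1 - x⁻¹) ≤ t * Real.log x := mul_le_mul_of_nonneg_left hlb h.le
      calc t - mac * mbc / mc = t * (1 - x⁻¹) := by rw [mul_sub, mul_one, hxinv]
        _ ≤ t * Real.log x := h3
    rw [Real.logb, ← mul_div_assoc]
    exact (div_le_div_iff_of_pos_right hlog2).mpr hkey

/-- Gibbs-type termwise bound (unconditional form). -/
lemma gibbs_term2 {t ma mb : ℝ} (ht : 0 ≤ t) (ha : t ≤ ma) (hb : t ≤ mb)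
    (ha0 : 0 ≤ ma) (hb0 : 0 ≤ mb) :
    (t - ma * mb) / Real.log 2 ≤ t * Real.logb 2 (t / (ma * mb)) := by
  have hlog2 : (0:ℝ) < Real.log 2 := Real.log_pos one_lt_two
  rcases eq_or_lt_of_le ht with h | h
  · rw [← h]
    simp only [zero_mul, zero_sub]
    apply div_nonpos_of_nonpos_of_nonneg _ hlog2.le
    simp only [neg_nonpos]
    positivity
  · have h1 : (0:ℝ) < ma := lt_of_lt_of_le h ha
    have h2 : (0:ℝ) < mb := lt_of_lt_of_le h hb
    set x : ℝ := t / (ma * mb) with hx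
    have hxpos : 0 < x := by positivity
    have hlb : 1 - x⁻¹ ≤ Real.log x := by
      have := Real.log_le_sub_one_of_pos (x := x⁻¹) (by positivity)
      rw [Real.log_inv] at this
      linarith
    have hxinv : t * x⁻¹ = ma * mb := by
      rw [hx]
      field_simp
    have hkey : t - ma * mb ≤ t * Real.log x := by
      have h3 : t * (1 - x⁻¹) ≤ t * Real.log x := mul_le_mul_of_nonneg_left hlb h.le
      calc t - ma * mb = t * (1 - x⁻¹) := by rw [mul_sub, mul_one, hxinv]
        _ ≤ t * Real.log x := h3
    rw [Real.logb, ← mul_div_assoc]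
    exact (div_le_div_iff_of_pos_right hlog2).mpr hkey

lemma condMutInfo_nonneg (p : Ω → ℝ) (hp0 : ∀ ω, 0 ≤ p ω) (A : Ω → α) (B : Ω → β)
    (C : Ω → γ) : 0 ≤ condMutInfo p A B C := by
  rw [condMutInfo_def]
  rw [show (∑ a : α, ∑ b : β, ∑ c : γ,
      m3 p A B C a b c * Real.logb 2
        ((m1 p C c * m3 p A B C a b c) / (m2 p A C a c * m2 p B C b c))) =
      ∑ c : γ, ∑ a : α, ∑ b : β,
      m3 p A B C a b c * Real.logb 2
        ((m1 p C c * m3 p A B C a b c) / (m2 p A C a c * m2 p B C b c)) from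
    swap3 (fun c a b => m3 p A B C a b c * Real.logb 2
        ((m1 p C c * m3 p A B C a b c) / (m2 p A C a c * m2 p B C b c)))]
  refine Finset.sum_nonneg fun c _ => ?_
  rcases eq_or_lt_of_le (m1_nonneg hp0 C c) with hc | hc
  · refine Finset.sum_nonneg fun a _ => Finset.sum_nonneg fun b _ => ?_
    have h0 : m3 p A B C a b c = 0 :=
      le_antisymm ((m3_le_m1_3 hp0 A B C a b c).trans (le_of_eq hc.symm))
        (m3_nonneg hp0 A B C a b c)
    rw [h0, zero_mul]
  · have hs1 : ∑ a : α, ∑ b : β, m3 p A B C a b c = m1 p C c := by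
      rw [m1_eq_sum_m2_right p A C c]
      exact Finset.sum_congr rfl fun a _ => (m2_eq_sum_m3_13 p A B C a c).symm
    have hs2 : ∑ a : α, ∑ b : β, m2 p A C a c * m2 p B C b c = m1 p C c * m1 p C c := by
      calc ∑ a : α, ∑ b : β, m2 p A C a c * m2 p B C b c
          = (∑ a : α, m2 p A C a c) * (∑ b : β, m2 p B C b c) :=
            (Finset.sum_mul_sum Finset.univ Finset.univ _ _).symm
        _ = m1 p C c * m1 p C c := by
            rw [← m1_eq_sum_m2_right p A C c, ← m1_eq_sum_m2_right p B C c]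
    have hz0 : (∑ a : α, ∑ b : β,
        (m3 p A B C a b c - m2 p A C a c * m2 p B C b c / m1 p C c)) = 0 := by
      simp only [Finset.sum_sub_distrib, ← Finset.sum_div]
      rw [hs1, hs2, mul_div_assoc, div_self (ne_of_gt hc), mul_one, sub_self]
    have hzero : (∑ a : α, ∑ b : β,
        (m3 p A B C a b c - m2 p A C a c * m2 p B C b c / m1 p C c) / Real.log 2) = 0 := by
      simp only [← Finset.sum_div]
      rw [hz0, zero_div]
    rw [← hzero]
    refine Finset.sum_le_sum fun a _ => Finset.sum_le_sum fun b _ => ?_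
    exact gibbs_term (m3_nonneg hp0 A B C a b c) (m3_le_m2_13 hp0 A B C a b c)
      (m3_le_m2_23 hp0 A B C a b c) hc (m2_nonneg hp0 A C a c) (m2_nonneg hp0 B C b c)

lemma mutInfo_nonneg (p : Ω → ℝ) (hp0 : ∀ ω, 0 ≤ p ω) (hp1 : ∑ ω, p ω = 1)
    (A : Ω → α) (B : Ω → β) : 0 ≤ mutInfo p A B := by
  rw [mutInfo_def]
  have hs1 : ∑ a : α, ∑ b : β, m2 p A B a b = 1 := by
    rw [← hp1, ← sum_m1 p A]
    exact Finset.sum_congr rfl fun a _ => (m1_eq_sum_m2 p A B a).symm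
  have hs2 : ∑ a : α, ∑ b : β, m1 p A a * m1 p B b = 1 := by
    rw [← Finset.sum_mul_sum Finset.univ Finset.univ (m1 p A) (m1 p B),
      sum_m1, sum_m1, hp1, mul_one]
  have hz0 : (∑ a : α, ∑ b : β, (m2 p A B a b - m1 p A a * m1 p B b)) = 0 := by
    simp only [Finset.sum_sub_distrib]
    rw [hs1, hs2, sub_self]
  have hzero : (∑ a : α, ∑ b : β, (m2 p A B a b - m1 p A a * m1 p B b) / Real.log 2) = 0 := by
    simp only [← Finset.sum_div]
    rw [hz0, zero_div]
  rw [← hzero]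
  refine Finset.sum_le_sum fun a _ => Finset.sum_le_sum fun b _ => ?_
  exact gibbs_term2 (m2_nonneg hp0 A B a b) (m2_le_m1_left hp0 A B a b)
    (m2_le_m1_right hp0 A B a b) (m1_nonneg hp0 A a) (m1_nonneg hp0 B b)

end ITAux

-- ===== chunk 4 =====
namespace ITAux
open Real
set_option linter.unusedSectionVars false
set_option linter.unusedVariables false

variable {Ω α β γ : Type} [Fintype Ω] [Fintype α] [Fintype β] [Fintype γ]
  [DecidableEq α] [DecidableEq β] [DecidableEq γ]

/-- Chain rule in the second argument: `I(A;(B,C)) = I(A;B) + I(A;C|B)` -/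
lemma chain2 (p : Ω → ℝ) (hp0 : ∀ ω, 0 ≤ p ω) (A : Ω → α) (B : Ω → β) (C : Ω → γ) :
    mutInfo p A (fun ω => (B ω, C ω)) = mutInfo p A B + condMutInfo p A C B := by
  rw [mutInfo_symm, chain p hp0 B C A, mutInfo_symm p B A, condMutInfo_comm p C A B]

lemma mutInfo_fst_le (p : Ω → ℝ) (hp0 : ∀ ω, 0 ≤ p ω) (A : Ω → α) (B : Ω → β) (C : Ω → γ) :
    mutInfo p A B ≤ mutInfo p A (fun ω => (B ω, C ω)) := by
  rw [chain2 p hp0 A B C]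
  linarith [condMutInfo_nonneg p hp0 A C B]

/-- `mutInfo` is invariant under injective relabeling of the first variable. -/
lemma mutInfo_comp_inj {α' : Type} [Fintype α'] [DecidableEq α'] (p : Ω → ℝ)
    (A : Ω → α) (B : Ω → β) (f : α → α') (hf : Function.Injective f) :
    mutInfo p (fun ω => f (A ω)) B = mutInfo p A B := by
  rw [mutInfo_def, mutInfo_def]
  have hm2 : ∀ a b, m2 p (fun ω => f (A ω)) B (f a) b = m2 p A B a b := by
    intro a b; unfold m2; congr 1
    exact filter_eq_of_iff (fun ω => by simp [hf.eq_iff])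
  have hm1 : ∀ a, m1 p (fun ω => f (A ω)) (f a) = m1 p A a := by
    intro a; unfold m1; congr 1
    exact filter_eq_of_iff (fun ω => by simp [hf.eq_iff])
  rw [← Finset.sum_subset (Finset.subset_univ (Finset.univ.image f))
    (by
      intro a' _ ha'
      refine Finset.sum_eq_zero fun b _ => ?_
      have hz : m2 p (fun ω => f (A ω)) B a' b = 0 := by
        unfold m2
        rw [Finset.filter_false_of_mem, Finset.sum_empty]
        intro ω _ h
        exact ha' (h.1 ▸ Finset.mem_image_of_mem f (Finset.mem_univ (A ω)))
      rw [hz, zero_mul])]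
  rw [Finset.sum_image (fun x _ y _ h => hf h)]
  refine Finset.sum_congr rfl fun a _ => Finset.sum_congr rfl fun b _ => ?_
  rw [hm2, hm1]

lemma mutInfo_comp_inj_right {β' : Type} [Fintype β'] [DecidableEq β'] (p : Ω → ℝ)
    (A : Ω → α) (B : Ω → β) (g : β → β') (hg : Function.Injective g) :
    mutInfo p A (fun ω => g (B ω)) = mutInfo p A B := by
  rw [mutInfo_symm, mutInfo_comp_inj p B A g hg, mutInfo_symm]

/-- Data-processing: `I(A; g(B)) ≤ I(A;B)`. -/
lemma mutInfo_comp_le {β' : Type} [Fintype β'] [DecidableEq β'] (p : Ω → ℝ)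
    (hp0 : ∀ ω, 0 ≤ p ω) (A : Ω → α) (B : Ω → β) (g : β → β') :
    mutInfo p A (fun ω => g (B ω)) ≤ mutInfo p A B := by
  have h1 : mutInfo p A B = mutInfo p A (fun ω => (g (B ω), B ω)) :=
    (mutInfo_comp_inj_right p A B (fun b => (g b, b))
      (fun x y h => (Prod.ext_iff.mp h).2)).symm
  rw [h1, chain2 p hp0 A (fun ω => g (B ω)) B]
  linarith [condMutInfo_nonneg p hp0 A B (fun ω => g (B ω))]

/-- Mutual information of a joint pmf given as a matrix. -/
noncomputable def mutInfoD {α β : Type} [Fintype α] [Fintype β] (q : α → β → ℝ) : ℝ :=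
  ∑ a : α, ∑ b : β,
    q a b * Real.logb 2 (q a b / ((∑ b' : β, q a b') * (∑ a' : α, q a' b)))

lemma mutInfo_eq_D (p : Ω → ℝ) (A : Ω → α) (B : Ω → β) :
    mutInfo p A B = mutInfoD (fun a b => m2 p A B a b) := by
  rw [mutInfo_def, mutInfoD]
  refine Finset.sum_congr rfl fun a _ => Finset.sum_congr rfl fun b _ => ?_
  rw [← m1_eq_sum_m2 p A B a, ← m1_eq_sum_m2_right p A B b]

end ITAux

-- ===== chunk 5 =====
namespace ITAux
open Real
set_option linter.unusedSectionVars false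
set_option linter.unusedVariables false

lemma tensor_term {x y X1 X2 Y1 Y2 : ℝ} (hx : 0 ≤ x) (hy : 0 ≤ y)
    (hX1 : x ≤ X1) (hX2 : x ≤ X2) (hY1 : y ≤ Y1) (hY2 : y ≤ Y2) :
    x * y * Real.logb 2 ((x * y) / ((X1 * Y1) * (X2 * Y2))) =
      y * (x * Real.logb 2 (x / (X1 * X2))) + x * (y * Real.logb 2 (y / (Y1 * Y2))) := by
  rcases eq_or_lt_of_le hx with h | hxpos
  · rw [← h]; ring
  rcases eq_or_lt_of_le hy with h | hypos
  · rw [← h]; ring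
  have h1 : (0:ℝ) < X1 := lt_of_lt_of_le hxpos hX1
  have h2 : (0:ℝ) < X2 := lt_of_lt_of_le hxpos hX2
  have h3 : (0:ℝ) < Y1 := lt_of_lt_of_le hypos hY1
  have h4 : (0:ℝ) < Y2 := lt_of_lt_of_le hypos hY2
  have harg : (x * y) / ((X1 * Y1) * (X2 * Y2)) = (x / (X1 * X2)) * (y / (Y1 * Y2)) := by
    field_simp
  rw [harg, Real.logb_mul (by positivity) (by positivity)]
  ring

lemma mutInfoD_tensor {α₁ α₂ β₁ β₂ : Type} [Fintype α₁] [Fintype α₂] [Fintype β₁] [Fintype β₂]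
    (q₁ : α₁ → β₁ → ℝ) (q₂ : α₂ → β₂ → ℝ)
    (h10 : ∀ a b, 0 ≤ q₁ a b) (h20 : ∀ a b, 0 ≤ q₂ a b)
    (h11 : ∑ a : α₁, ∑ b : β₁, q₁ a b = 1) (h21 : ∑ a : α₂, ∑ b : β₂, q₂ a b = 1) :
    mutInfoD (fun (a : α₁ × α₂) (b : β₁ × β₂) => q₁ a.1 b.1 * q₂ a.2 b.2) =
      mutInfoD q₁ + mutInfoD q₂ := by
  unfold mutInfoD
  have hstep : (∑ a : α₁ × α₂, ∑ b : β₁ × β₂,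
      q₁ a.1 b.1 * q₂ a.2 b.2 * Real.logb 2 ((q₁ a.1 b.1 * q₂ a.2 b.2) /
        ((∑ b' : β₁ × β₂, q₁ a.1 b'.1 * q₂ a.2 b'.2) *
          (∑ a' : α₁ × α₂, q₁ a'.1 b.1 * q₂ a'.2 b.2)))) =
    ∑ a₁ : α₁, ∑ a₂ : α₂, ∑ b₁ : β₁, ∑ b₂ : β₂,
      (q₂ a₂ b₂ * (q₁ a₁ b₁ * Real.logb 2 (q₁ a₁ b₁ /
          ((∑ b' : β₁, q₁ a₁ b') * (∑ a' : α₁, q₁ a' b₁)))) +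
       q₁ a₁ b₁ * (q₂ a₂ b₂ * Real.logb 2 (q₂ a₂ b₂ /
          ((∑ b' : β₂, q₂ a₂ b') * (∑ a' : α₂, q₂ a' b₂))))) := by
    rw [Fintype.sum_prod_type]
    refine Finset.sum_congr rfl fun a₁ _ => Finset.sum_congr rfl fun a₂ _ => ?_
    rw [Fintype.sum_prod_type]
    refine Finset.sum_congr rfl fun b₁ _ => Finset.sum_congr rfl fun b₂ _ => ?_
    have hrow : (∑ b' : β₁ × β₂, q₁ a₁ b'.1 * q₂ a₂ b'.2) =
        (∑ b' : β₁, q₁ a₁ b') * (∑ b' : β₂, q₂ a₂ b') := by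
      rw [Fintype.sum_prod_type]
      exact (Finset.sum_mul_sum Finset.univ Finset.univ (fun b' => q₁ a₁ b')
        (fun b' => q₂ a₂ b')).symm
    have hcol : (∑ a' : α₁ × α₂, q₁ a'.1 b₁ * q₂ a'.2 b₂) =
        (∑ a' : α₁, q₁ a' b₁) * (∑ a' : α₂, q₂ a' b₂) := by
      rw [Fintype.sum_prod_type]
      exact (Finset.sum_mul_sum Finset.univ Finset.univ (fun a' => q₁ a' b₁)
        (fun a' => q₂ a' b₂)).symm
    rw [hrow, hcol]
    have hregroup : ((∑ b' : β₁, q₁ a₁ b') * (∑ b' : β₂, q₂ a₂ b')) *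
        ((∑ a' : α₁, q₁ a' b₁) * (∑ a' : α₂, q₂ a' b₂)) =
        ((∑ b' : β₁, q₁ a₁ b') * (∑ b' : β₂, q₂ a₂ b')) *
        ((∑ a' : α₁, q₁ a' b₁) * (∑ a' : α₂, q₂ a' b₂)) := rfl
    exact tensor_term (h10 a₁ b₁) (h20 a₂ b₂)
      (Finset.single_le_sum (fun i _ => h10 a₁ i) (Finset.mem_univ b₁))
      (Finset.single_le_sum (fun i _ => h10 i b₁) (Finset.mem_univ a₁))
      (Finset.single_le_sum (fun i _ => h20 a₂ i) (Finset.mem_univ b₂))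
      (Finset.single_le_sum (fun i _ => h20 i b₂) (Finset.mem_univ a₂))
  rw [hstep]
  simp only [Finset.sum_add_distrib]
  congr 1
  · -- first quadruple sum equals mutInfoD q₁
    refine Eq.trans (Finset.sum_congr rfl fun a₁ _ => ?_) rfl
    calc (∑ a₂ : α₂, ∑ b₁ : β₁, ∑ b₂ : β₂, q₂ a₂ b₂ *
            (q₁ a₁ b₁ * Real.logb 2 (q₁ a₁ b₁ /
              ((∑ b' : β₁, q₁ a₁ b') * (∑ a' : α₁, q₁ a' b₁)))))
        = ∑ a₂ : α₂, ∑ b₁ : β₁, (∑ b₂ : β₂, q₂ a₂ b₂) *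
            (q₁ a₁ b₁ * Real.logb 2 (q₁ a₁ b₁ /
              ((∑ b' : β₁, q₁ a₁ b') * (∑ a' : α₁, q₁ a' b₁)))) := by
          simp only [← Finset.sum_mul]
      _ = ∑ a₂ : α₂, (∑ b₂ : β₂, q₂ a₂ b₂) * (∑ b₁ : β₁,
            q₁ a₁ b₁ * Real.logb 2 (q₁ a₁ b₁ /
              ((∑ b' : β₁, q₁ a₁ b') * (∑ a' : α₁, q₁ a' b₁)))) := by
          simp only [← Finset.mul_sum]
      _ = (∑ a₂ : α₂, ∑ b₂ : β₂, q₂ a₂ b₂) * (∑ b₁ : β₁,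
            q₁ a₁ b₁ * Real.logb 2 (q₁ a₁ b₁ /
              ((∑ b' : β₁, q₁ a₁ b') * (∑ a' : α₁, q₁ a' b₁)))) := by
          rw [← Finset.sum_mul]
      _ = ∑ b₁ : β₁, q₁ a₁ b₁ * Real.logb 2 (q₁ a₁ b₁ /
              ((∑ b' : β₁, q₁ a₁ b') * (∑ a' : α₁, q₁ a' b₁))) := by
          rw [h21, one_mul]
  · -- second quadruple sum equals mutInfoD q₂
    calc (∑ a₁ : α₁, ∑ a₂ : α₂, ∑ b₁ : β₁, ∑ b₂ : β₂, q₁ a₁ b₁ *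
            (q₂ a₂ b₂ * Real.logb 2 (q₂ a₂ b₂ /
              ((∑ b' : β₂, q₂ a₂ b') * (∑ a' : α₂, q₂ a' b₂)))))
        = ∑ a₁ : α₁, ∑ a₂ : α₂, ∑ b₁ : β₁, q₁ a₁ b₁ *
            (∑ b₂ : β₂, q₂ a₂ b₂ * Real.logb 2 (q₂ a₂ b₂ /
              ((∑ b' : β₂, q₂ a₂ b') * (∑ a' : α₂, q₂ a' b₂)))) := by
          simp only [← Finset.mul_sum]
      _ = ∑ a₁ : α₁, ∑ a₂ : α₂, (∑ b₁ : β₁, q₁ a₁ b₁) *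
            (∑ b₂ : β₂, q₂ a₂ b₂ * Real.logb 2 (q₂ a₂ b₂ /
              ((∑ b' : β₂, q₂ a₂ b') * (∑ a' : α₂, q₂ a' b₂)))) := by
          simp only [← Finset.sum_mul]
      _ = ∑ a₁ : α₁, (∑ b₁ : β₁, q₁ a₁ b₁) *
            (∑ a₂ : α₂, ∑ b₂ : β₂, q₂ a₂ b₂ * Real.logb 2 (q₂ a₂ b₂ /
              ((∑ b' : β₂, q₂ a₂ b') * (∑ a' : α₂, q₂ a' b₂)))) := by
          simp only [← Finset.mul_sum]
      _ = (∑ a₁ : α₁, ∑ b₁ : β₁, q₁ a₁ b₁) *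
            (∑ a₂ : α₂, ∑ b₂ : β₂, q₂ a₂ b₂ * Real.logb 2 (q₂ a₂ b₂ /
              ((∑ b' : β₂, q₂ a₂ b') * (∑ a' : α₂, q₂ a' b₂)))) := by
          rw [← Finset.sum_mul]
      _ = ∑ a₂ : α₂, ∑ b₂ : β₂, q₂ a₂ b₂ * Real.logb 2 (q₂ a₂ b₂ /
              ((∑ b' : β₂, q₂ a₂ b') * (∑ a' : α₂, q₂ a' b₂))) := by
          rw [h11, one_mul]

end ITAux

-- ===== chunk 6 =====
namespace ITAux
open Real
set_option linter.unusedSectionVars false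
set_option linter.unusedVariables false

variable {Ω α β γ : Type} [Fintype Ω] [Fintype α] [Fintype β] [Fintype γ]
  [DecidableEq α] [DecidableEq β] [DecidableEq γ]

lemma regroup {α' : Type} [Fintype α'] [DecidableEq α'] (p : Ω → ℝ)
    (A : Ω → α) (B : Ω → β) (f : α → α') (F : α' → β → ℝ) :
    (∑ a' : α', ∑ b : β, m2 p (fun ω => f (A ω)) B a' b * F a' b) =
      ∑ a : α, ∑ b : β, m2 p A B a b * F (f a) b := by
  have hdec : ∀ (a' : α') (b : β), m2 p (fun ω => f (A ω)) B a' b =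
      ∑ a : α, if f a = a' then m2 p A B a b else 0 := by
    intro a' b
    unfold m2
    rw [← Finset.sum_fiberwise (Finset.univ.filter (fun ω => f (A ω) = a' ∧ B ω = b)) A p]
    refine Finset.sum_congr rfl fun a _ => ?_
    rw [Finset.filter_filter]
    by_cases h : f a = a'
    · rw [if_pos h]
      congr 1
      exact filter_eq_of_iff (fun ω =>
        ⟨fun ⟨⟨_, h2⟩, h3⟩ => ⟨h3, h2⟩, fun ⟨h1, h2⟩ => ⟨⟨(congrArg f h1).trans h, h2⟩, h1⟩⟩)
    · rw [if_neg h, Finset.filter_false_of_mem, Finset.sum_empty]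
      intro ω _ hω
      exact h ((congrArg f hω.2.symm).trans hω.1.1)
  calc (∑ a' : α', ∑ b : β, m2 p (fun ω => f (A ω)) B a' b * F a' b)
      = ∑ a' : α', ∑ b : β, ∑ a : α,
          (if f a = a' then m2 p A B a b * F a' b else 0) := by
        refine Finset.sum_congr rfl fun a' _ => Finset.sum_congr rfl fun b _ => ?_
        rw [hdec a' b, Finset.sum_mul]
        exact Finset.sum_congr rfl fun a _ => by rw [ite_mul, zero_mul]
    _ = ∑ a : α, ∑ a' : α', ∑ b : β,
          (if f a = a' then m2 p A B a b * F a' b else 0) :=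
        swap3 (fun (a : α) (a' : α') (b : β) =>
          if f a = a' then m2 p A B a b * F a' b else 0)
    _ = ∑ a : α, ∑ b : β, m2 p A B a b * F (f a) b := by
        refine Finset.sum_congr rfl fun a _ => ?_
        rw [Finset.sum_comm]
        refine Finset.sum_congr rfl fun b _ => ?_
        rw [Finset.sum_ite_eq Finset.univ (f a) (fun a' => m2 p A B a b * F a' b)]
        simp

lemma m2_le_comp {α' : Type} [Fintype α'] [DecidableEq α'] (p : Ω → ℝ)
    (hp0 : ∀ ω, 0 ≤ p ω) (A : Ω → α) (B : Ω → β) (f : α → α') (a : α) (b : β) :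
    m2 p A B a b ≤ m2 p (fun ω => f (A ω)) B (f a) b :=
  sum_filter_le hp0 fun ω h => ⟨congrArg f h.1, h.2⟩

/-- `I(A;B | f(A)) = I(A;B) - I(f(A);B)` -/
lemma condMutInfo_quot {α' : Type} [Fintype α'] [DecidableEq α'] (p : Ω → ℝ)
    (hp0 : ∀ ω, 0 ≤ p ω) (A : Ω → α) (B : Ω → β) (f : α → α') :
    condMutInfo p A B (fun ω => f (A ω)) =
      mutInfo p A B - mutInfo p (fun ω => f (A ω)) B := by
  have hcol : condMutInfo p A B (fun ω => f (A ω)) =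
      ∑ a : α, ∑ b : β, m2 p A B a b * Real.logb 2
        ((m1 p (fun ω => f (A ω)) (f a) * m2 p A B a b) /
          (m1 p A a * m2 p (fun ω => f (A ω)) B (f a) b)) := by
    rw [condMutInfo_def]
    refine Finset.sum_congr rfl fun a _ => Finset.sum_congr rfl fun b _ => ?_
    rw [Finset.sum_eq_single (f a)]
    · have e1 : m3 p A B (fun ω => f (A ω)) a b (f a) = m2 p A B a b := by
        unfold m3 m2; congr 1
        exact filter_eq_of_iff (fun ω =>
          ⟨fun ⟨h1, h2, _⟩ => ⟨h1, h2⟩, fun ⟨h1, h2⟩ => ⟨h1, h2, congrArg f h1⟩⟩)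
      have e2 : m2 p A (fun ω => f (A ω)) a (f a) = m1 p A a := by
        unfold m2 m1; congr 1
        exact filter_eq_of_iff (fun ω =>
          ⟨fun ⟨h1, _⟩ => h1, fun h1 => ⟨h1, congrArg f h1⟩⟩)
      have e3 : m2 p B (fun ω => f (A ω)) b (f a) =
          m2 p (fun ω => f (A ω)) B (f a) b := m2_comm p B (fun ω => f (A ω)) b (f a)
      rw [e1, e2, e3]
    · intro c _ hc
      have hz : m3 p A B (fun ω => f (A ω)) a b c = 0 := by
        unfold m3
        rw [Finset.filter_false_of_mem, Finset.sum_empty]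
        intro ω _ hω
        exact hc (((congrArg f hω.1.symm).trans hω.2.2).symm)
      rw [hz, zero_mul]
    · intro h; exact absurd (Finset.mem_univ _) h
  have h2' : mutInfo p (fun ω => f (A ω)) B =
      ∑ a : α, ∑ b : β, m2 p A B a b * Real.logb 2
        (m2 p (fun ω => f (A ω)) B (f a) b /
          (m1 p (fun ω => f (A ω)) (f a) * m1 p B b)) := by
    rw [mutInfo_def]
    exact regroup p A B f (fun a' b => Real.logb 2
      (m2 p (fun ω => f (A ω)) B a' b / (m1 p (fun ω => f (A ω)) a' * m1 p B b)))
  rw [hcol, mutInfo_def p A B, h2', ← Finset.sum_sub_distrib]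
  refine Finset.sum_congr rfl fun a _ => ?_
  rw [← Finset.sum_sub_distrib]
  refine Finset.sum_congr rfl fun b _ => ?_
  rcases eq_or_lt_of_le (m2_nonneg hp0 A B a b) with h | h
  · rw [← h]; ring
  · rw [← mul_sub]
    congr 1
    have h1 : (0:ℝ) < m1 p A a := lt_of_lt_of_le h (m2_le_m1_left hp0 A B a b)
    have h2 : (0:ℝ) < m1 p B b := lt_of_lt_of_le h (m2_le_m1_right hp0 A B a b)
    have h3 : (0:ℝ) < m2 p (fun ω => f (A ω)) B (f a) b :=
      lt_of_lt_of_le h (m2_le_comp p hp0 A B f a b)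
    have h4 : (0:ℝ) < m1 p (fun ω => f (A ω)) (f a) :=
      lt_of_lt_of_le h3 (m2_le_m1_left hp0 (fun ω => f (A ω)) B (f a) b)
    rw [← Real.logb_div (by positivity) (by positivity)]
    congr 1
    field_simp

end ITAux

open ITAux in
set_option maxHeartbeats 1000000 in
/-- one-step super-martingale property of `I_H` for a subgroup `H ≤ G`. -/
theorem IH_supermartingale
    {G Y : Type} [Fintype G] [AddCommGroup G] [DecidableEq G] [Fintype Y] [DecidableEq Y]
    (W : G → Y → ℝ) (hW0 : ∀ x y, 0 ≤ W x y) (hW1 : ∀ x, ∑ y, W x y = 1)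
    (H : AddSubgroup G) [DecidableEq (G ⧸ H)] [Fintype (G ⧸ H)]
    (p : G × G × Y × Y → ℝ)
    (hp : ∀ u₁ u₂ : G, ∀ y₁ y₂ : Y,
      p (u₁, u₂, y₁, y₂) =
        (1 / ((Fintype.card G : ℝ)) ^ 2) * W (u₁ + u₂) y₁ * W u₂ y₂) :
    (mutInfo p (fun ω => (QuotientAddGroup.mk ω.1 : G ⧸ H)) (fun ω => (ω.2.2.1, ω.2.2.2)) +
        mutInfo p (fun ω => (QuotientAddGroup.mk ω.2.1 : G ⧸ H))
          (fun ω => (ω.2.2.1, ω.2.2.2, ω.1)) ≥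
      2 * mutInfo p (fun ω => (QuotientAddGroup.mk (ω.1 + ω.2.1) : G ⧸ H))
          (fun ω => ω.2.2.1)) ∧
    (condMutInfo p (fun ω => ω.1) (fun ω => (ω.2.2.1, ω.2.2.2))
          (fun ω => (QuotientAddGroup.mk ω.1 : G ⧸ H)) +
        condMutInfo p (fun ω => ω.2.1) (fun ω => (ω.2.2.1, ω.2.2.2, ω.1))
          (fun ω => (QuotientAddGroup.mk ω.2.1 : G ⧸ H)) ≤
      2 * condMutInfo p (fun ω => ω.1 + ω.2.1) (fun ω => ω.2.2.1)
          (fun ω => (QuotientAddGroup.mk (ω.1 + ω.2.1) : G ⧸ H))) := by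
  have hQ : (0:ℝ) < (Fintype.card G : ℝ) := by exact_mod_cast Fintype.card_pos
  have hQ0 : ((Fintype.card G : ℝ)) ≠ 0 := ne_of_gt hQ
  have hp0 : ∀ ω, 0 ≤ p ω := by
    rintro ⟨u₁, u₂, y₁, y₂⟩
    rw [hp]
    have := hW0 (u₁ + u₂) y₁
    have := hW0 u₂ y₂
    positivity
  have hpull : ∀ {c : Prop} [inst : Decidable c] (f : Y → ℝ),
      (∑ y₂ : Y, if c then f y₂ else 0) = if c then (∑ y₂ : Y, f y₂) else 0 := by
    intro c inst f; split_ifs <;> simp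
  have hQsq : (1:ℝ) / (Fintype.card G : ℝ) ^ 2 =
      (1 / (Fintype.card G : ℝ)) * (1 / (Fintype.card G : ℝ)) := by
    rw [sq]
    exact (one_div_mul_one_div _ _).symm
  -- the induced single-copy channel pmf on cosets
  set r : (G ⧸ H) → Y → ℝ := fun s y =>
    (1 / (Fintype.card G : ℝ)) *
      ∑ x ∈ Finset.univ.filter (fun x => (QuotientAddGroup.mk x : G ⧸ H) = s), W x y with hrdef
  -- computation (Ia): pushforward of (π(U₁+U₂), Y₁)
  have Ia : ∀ (s : G ⧸ H) (y : Y),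
      ITAux.m2 p (fun ω => (QuotientAddGroup.mk (ω.1 + ω.2.1) : G ⧸ H))
        (fun ω => ω.2.2.1) s y = r s y := by
    intro s y
    unfold ITAux.m2
    rw [Finset.sum_filter]
    simp only [Fintype.sum_prod_type]
    have step1 : ∀ u₁ u₂ : G,
        (∑ y₁ : Y, ∑ y₂ : Y,
          if (QuotientAddGroup.mk (u₁ + u₂) : G ⧸ H) = s ∧ y₁ = y
          then p (u₁, u₂, y₁, y₂) else 0) =
        (if (QuotientAddGroup.mk (u₁ + u₂) : G ⧸ H) = s
          then (1 / (Fintype.card G : ℝ) ^ 2) * W (u₁ + u₂) y else 0) := by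
      intro u₁ u₂
      by_cases hc : (QuotientAddGroup.mk (u₁ + u₂) : G ⧸ H) = s
      · simp only [hc, true_and, if_true]
        have hy : ∀ y₁ : Y, (∑ y₂ : Y, if y₁ = y then p (u₁, u₂, y₁, y₂) else 0) =
            if y₁ = y then (∑ y₂ : Y, p (u₁, u₂, y₁, y₂)) else 0 := fun y₁ => hpull _
        simp only [hy]
        rw [Finset.sum_ite_eq' Finset.univ y (fun y₁ => ∑ y₂ : Y, p (u₁, u₂, y₁, y₂)),
          if_pos (Finset.mem_univ y)]
        simp only [hp]
        rw [← Finset.mul_sum, hW1 u₂, mul_one]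
      · rw [if_neg hc]
        refine Finset.sum_eq_zero fun y₁ _ => Finset.sum_eq_zero fun y₂ _ => ?_
        exact if_neg (fun h => hc h.1)
    simp only [step1]
    rw [Finset.sum_comm]
    have step2 : ∀ u₂ : G,
        (∑ u₁ : G, if (QuotientAddGroup.mk (u₁ + u₂) : G ⧸ H) = s
            then (1 / (Fintype.card G : ℝ) ^ 2) * W (u₁ + u₂) y else 0) =
        ∑ x : G, if (QuotientAddGroup.mk x : G ⧸ H) = s
            then (1 / (Fintype.card G : ℝ) ^ 2) * W x y else 0 := fun u₂ =>
      Equiv.sum_comp (Equiv.addRight u₂) (fun x =>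
        if (QuotientAddGroup.mk x : G ⧸ H) = s
        then (1 / (Fintype.card G : ℝ) ^ 2) * W x y else 0)
    simp only [step2]
    rw [Finset.sum_const, Finset.card_univ, nsmul_eq_mul, ← Finset.sum_filter, hrdef]
    rw [← Finset.mul_sum]
    field_simp

  -- Σ over both outputs of p at fixed (u₁,u₂)
  have hww : ∀ u₁ u₂ : G, (∑ z₁ : Y, ∑ z₂ : Y, p (u₁, u₂, z₁, z₂)) =
      1 / (Fintype.card G : ℝ) ^ 2 := by
    intro u₁ u₂
    simp only [hp]
    have h1 : ∀ z₁ : Y, (∑ z₂ : Y, 1 / (Fintype.card G : ℝ) ^ 2 * W (u₁ + u₂) z₁ * W u₂ z₂) =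
        1 / (Fintype.card G : ℝ) ^ 2 * W (u₁ + u₂) z₁ := by
      intro z₁; rw [← Finset.mul_sum, hW1, mul_one]
    simp only [h1]
    rw [← Finset.mul_sum, hW1, mul_one]
  have hp1 : ∑ ω, p ω = 1 := by
    simp only [Fintype.sum_prod_type]
    simp only [hww]
    rw [Finset.sum_const, Finset.sum_const, Finset.card_univ, nsmul_eq_mul, nsmul_eq_mul]
    field_simp
  have hr0 : ∀ (s : G ⧸ H) (y : Y), 0 ≤ r s y := by
    intro s y
    rw [hrdef]
    exact mul_nonneg (by positivity) (Finset.sum_nonneg fun x _ => hW0 x y)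
  have hr1 : ∑ s : G ⧸ H, ∑ y : Y, r s y = 1 := by
    have h1 : ∀ s : G ⧸ H, (∑ y : Y, r s y) = (1 / (Fintype.card G : ℝ)) *
        ∑ x ∈ Finset.univ.filter (fun x => (QuotientAddGroup.mk x : G ⧸ H) = s), (1:ℝ) := by
      intro s
      rw [hrdef]
      simp only
      rw [← Finset.mul_sum, Finset.sum_comm]
      congr 1
      exact Finset.sum_congr rfl fun x _ => hW1 x
    simp only [h1]
    rw [← Finset.mul_sum, Finset.sum_fiberwise Finset.univ
      (fun x : G => (QuotientAddGroup.mk x : G ⧸ H)) (fun _ => (1:ℝ))]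
    rw [Finset.sum_const, Finset.card_univ, nsmul_eq_mul, mul_one]
    field_simp
  -- computation (Ib): pushforward of ((π(U₁+U₂), π U₂), (Y₁,Y₂)) is r ⊗ r
  have Ib : ∀ (a : (G ⧸ H) × (G ⧸ H)) (b : Y × Y),
      ITAux.m2 p
        (fun ω => ((QuotientAddGroup.mk (ω.1 + ω.2.1) : G ⧸ H),
          (QuotientAddGroup.mk ω.2.1 : G ⧸ H)))
        (fun ω => (ω.2.2.1, ω.2.2.2)) a b = r a.1 b.1 * r a.2 b.2 := by
    rintro ⟨s, v⟩ ⟨y₁, y₂⟩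
    unfold ITAux.m2
    rw [Finset.sum_filter]
    simp only [Fintype.sum_prod_type, Prod.mk.injEq]
    have step1 : ∀ u₁ u₂ : G,
        (∑ z₁ : Y, ∑ z₂ : Y,
          if ((QuotientAddGroup.mk (u₁ + u₂) : G ⧸ H) = s ∧
              (QuotientAddGroup.mk u₂ : G ⧸ H) = v) ∧ z₁ = y₁ ∧ z₂ = y₂
          then p (u₁, u₂, z₁, z₂) else 0) =
        (if (QuotientAddGroup.mk (u₁ + u₂) : G ⧸ H) = s ∧
            (QuotientAddGroup.mk u₂ : G ⧸ H) = v
          then 1 / (Fintype.card G : ℝ) ^ 2 * W (u₁ + u₂) y₁ * W u₂ y₂ else 0) := by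
      intro u₁ u₂
      by_cases hc : (QuotientAddGroup.mk (u₁ + u₂) : G ⧸ H) = s ∧
          (QuotientAddGroup.mk u₂ : G ⧸ H) = v
      · simp only [hc, true_and, if_true]
        have hz : ∀ z₁ : Y, (∑ z₂ : Y, if z₁ = y₁ ∧ z₂ = y₂ then p (u₁, u₂, z₁, z₂) else 0) =
            if z₁ = y₁ then p (u₁, u₂, z₁, y₂) else 0 := by
          intro z₁
          by_cases h : z₁ = y₁
          · simp only [h, true_and, if_true]
            rw [Finset.sum_ite_eq' Finset.univ y₂ (fun z₂ => p (u₁, u₂, y₁, z₂)),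
              if_pos (Finset.mem_univ y₂)]
          · simp [h]
        simp only [hz]
        rw [Finset.sum_ite_eq' Finset.univ y₁ (fun z₁ => p (u₁, u₂, z₁, y₂)),
          if_pos (Finset.mem_univ y₁), hp]
      · rw [if_neg hc]
        refine Finset.sum_eq_zero fun z₁ _ => Finset.sum_eq_zero fun z₂ _ => ?_
        exact if_neg (fun h => hc h.1)
    simp only [step1]
    rw [Finset.sum_comm]
    have step2 : ∀ u₂ : G,
        (∑ u₁ : G, if (QuotientAddGroup.mk (u₁ + u₂) : G ⧸ H) = s ∧
            (QuotientAddGroup.mk u₂ : G ⧸ H) = v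
          then 1 / (Fintype.card G : ℝ) ^ 2 * W (u₁ + u₂) y₁ * W u₂ y₂ else 0) =
        (if (QuotientAddGroup.mk u₂ : G ⧸ H) = v
          then (1 / (Fintype.card G : ℝ) ^ 2 * W u₂ y₂) *
            ∑ x ∈ Finset.univ.filter (fun x => (QuotientAddGroup.mk x : G ⧸ H) = s), W x y₁
          else 0) := by
      intro u₂
      by_cases hv : (QuotientAddGroup.mk u₂ : G ⧸ H) = v
      · simp only [hv, and_true, if_true]
        rw [show (∑ u₁ : G, if (QuotientAddGroup.mk (u₁ + u₂) : G ⧸ H) = s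
              then 1 / (Fintype.card G : ℝ) ^ 2 * W (u₁ + u₂) y₁ * W u₂ y₂ else 0) =
            ∑ x : G, if (QuotientAddGroup.mk x : G ⧸ H) = s
              then 1 / (Fintype.card G : ℝ) ^ 2 * W x y₁ * W u₂ y₂ else 0 from
          Equiv.sum_comp (Equiv.addRight u₂) (fun x =>
            if (QuotientAddGroup.mk x : G ⧸ H) = s
            then 1 / (Fintype.card G : ℝ) ^ 2 * W x y₁ * W u₂ y₂ else 0)]
        rw [← Finset.sum_filter]
        have hre : ∀ x : G, 1 / (Fintype.card G : ℝ) ^ 2 * W x y₁ * W u₂ y₂ =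
            (1 / (Fintype.card G : ℝ) ^ 2 * W u₂ y₂) * W x y₁ := fun x => by ring
        simp only [hre]
        rw [← Finset.mul_sum]
      · simp only [hv, and_false, if_false]
        exact Finset.sum_eq_zero fun u₁ _ => rfl
    simp only [step2]
    rw [← Finset.sum_filter]
    have hre2 : ∀ u₂ : G, (1 / (Fintype.card G : ℝ) ^ 2 * W u₂ y₂) *
        (∑ x ∈ Finset.univ.filter (fun x => (QuotientAddGroup.mk x : G ⧸ H) = s), W x y₁) =
        ((1 / (Fintype.card G : ℝ) ^ 2) *
          ∑ x ∈ Finset.univ.filter (fun x => (QuotientAddGroup.mk x : G ⧸ H) = s), W x y₁) *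
          W u₂ y₂ := fun u₂ => by ring
    simp only [hre2]
    rw [← Finset.mul_sum]
    simp only [hrdef]
    rw [hQsq]
    ring
  -- computation (Ic): joint of (U₂, U₁) is uniform
  have Ic : ∀ a b : G, ITAux.m2 p (fun ω => ω.2.1) (fun ω => ω.1) a b =
      1 / (Fintype.card G : ℝ) ^ 2 := by
    intro a b
    unfold ITAux.m2
    rw [Finset.sum_filter]
    simp only [Fintype.sum_prod_type]
    have step1 : ∀ u₁ u₂ : G, (∑ z₁ : Y, ∑ z₂ : Y,
        if u₂ = a ∧ u₁ = b then p (u₁, u₂, z₁, z₂) else 0) =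
        (if u₂ = a ∧ u₁ = b then 1 / (Fintype.card G : ℝ) ^ 2 else 0) := by
      intro u₁ u₂
      by_cases hc : u₂ = a ∧ u₁ = b
      · simp only [if_pos hc]
        exact hww u₁ u₂
      · rw [if_neg hc]
        refine Finset.sum_eq_zero fun z₁ _ => Finset.sum_eq_zero fun z₂ _ => ?_
        exact if_neg hc
    simp only [step1]
    simp only [ite_and]
    have step2 : ∀ u₁ : G, (∑ u₂ : G, if u₂ = a then
        (if u₁ = b then 1 / (Fintype.card G : ℝ) ^ 2 else 0) else 0) =
        (if u₁ = b then 1 / (Fintype.card G : ℝ) ^ 2 else 0) := by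
      intro u₁
      rw [Finset.sum_ite_eq' Finset.univ a
        (fun _ => if u₁ = b then 1 / (Fintype.card G : ℝ) ^ 2 else 0),
        if_pos (Finset.mem_univ a)]
    simp only [step2]
    rw [Finset.sum_ite_eq' Finset.univ b (fun _ => 1 / (Fintype.card G : ℝ) ^ 2),
      if_pos (Finset.mem_univ b)]
  -- computation (Ie): pushforward of (X₁, Y₁)
  have Ie : ∀ (x : G) (y : Y), ITAux.m2 p (fun ω => ω.1 + ω.2.1) (fun ω => ω.2.2.1) x y =
      1 / (Fintype.card G : ℝ) * W x y := by
    intro x y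
    unfold ITAux.m2
    rw [Finset.sum_filter]
    simp only [Fintype.sum_prod_type]
    have step1 : ∀ u₁ u₂ : G,
        (∑ z₁ : Y, ∑ z₂ : Y, if u₁ + u₂ = x ∧ z₁ = y then p (u₁, u₂, z₁, z₂) else 0) =
        (if u₁ + u₂ = x then 1 / (Fintype.card G : ℝ) ^ 2 * W (u₁ + u₂) y else 0) := by
      intro u₁ u₂
      by_cases hc : u₁ + u₂ = x
      · simp only [hc, true_and, if_true]
        have hy : ∀ z₁ : Y, (∑ z₂ : Y, if z₁ = y then p (u₁, u₂, z₁, z₂) else 0) =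
            if z₁ = y then (∑ z₂ : Y, p (u₁, u₂, z₁, z₂)) else 0 := fun z₁ => hpull _
        simp only [hy]
        rw [Finset.sum_ite_eq' Finset.univ y (fun z₁ => ∑ z₂ : Y, p (u₁, u₂, z₁, z₂)),
          if_pos (Finset.mem_univ y)]
        simp only [hp]
        rw [← Finset.mul_sum, hW1 u₂, mul_one, hc]
      · rw [if_neg hc]
        refine Finset.sum_eq_zero fun z₁ _ => Finset.sum_eq_zero fun z₂ _ => ?_
        exact if_neg (fun h => hc h.1)
    simp only [step1]
    rw [Finset.sum_comm]
    have step2 : ∀ u₂ : G,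
        (∑ u₁ : G, if u₁ + u₂ = x then
          1 / (Fintype.card G : ℝ) ^ 2 * W (u₁ + u₂) y else 0) =
        1 / (Fintype.card G : ℝ) ^ 2 * W x y := by
      intro u₂
      rw [show (∑ u₁ : G, if u₁ + u₂ = x then
            1 / (Fintype.card G : ℝ) ^ 2 * W (u₁ + u₂) y else 0) =
          ∑ w : G, if w = x then 1 / (Fintype.card G : ℝ) ^ 2 * W w y else 0 from
        Equiv.sum_comp (Equiv.addRight u₂) (fun w =>
          if w = x then 1 / (Fintype.card G : ℝ) ^ 2 * W w y else 0)]
      rw [Finset.sum_ite_eq' Finset.univ x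
        (fun w => 1 / (Fintype.card G : ℝ) ^ 2 * W w y), if_pos (Finset.mem_univ x)]
    simp only [step2]
    rw [Finset.sum_const, Finset.card_univ, nsmul_eq_mul]
    field_simp
  -- computation (Id): pushforward of ((X₁,X₂),(Y₁,Y₂)) is product
  have Id : ∀ (a : G × G) (b : Y × Y),
      ITAux.m2 p (fun ω => (ω.1 + ω.2.1, ω.2.1)) (fun ω => (ω.2.2.1, ω.2.2.2)) a b =
        (1 / (Fintype.card G : ℝ) * W a.1 b.1) * (1 / (Fintype.card G : ℝ) * W a.2 b.2) := by
    rintro ⟨x₁, x₂⟩ ⟨y₁, y₂⟩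
    unfold ITAux.m2
    rw [Finset.sum_filter]
    simp only [Fintype.sum_prod_type, Prod.mk.injEq]
    have step1 : ∀ u₁ u₂ : G,
        (∑ z₁ : Y, ∑ z₂ : Y,
          if (u₁ + u₂ = x₁ ∧ u₂ = x₂) ∧ z₁ = y₁ ∧ z₂ = y₂
          then p (u₁, u₂, z₁, z₂) else 0) =
        (if u₁ + u₂ = x₁ ∧ u₂ = x₂
          then 1 / (Fintype.card G : ℝ) ^ 2 * W (u₁ + u₂) y₁ * W u₂ y₂ else 0) := by
      intro u₁ u₂
      by_cases hc : u₁ + u₂ = x₁ ∧ u₂ = x₂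
      · simp only [ite_and, if_pos hc.1, if_pos hc.2]
        have hz : ∀ z₁ : Y, (∑ z₂ : Y,
            if z₁ = y₁ then (if z₂ = y₂ then p (u₁, u₂, z₁, z₂) else 0) else 0) =
            if z₁ = y₁ then p (u₁, u₂, z₁, y₂) else 0 := by
          intro z₁
          rw [hpull (fun z₂ => if z₂ = y₂ then p (u₁, u₂, z₁, z₂) else 0)]
          by_cases h : z₁ = y₁
          · rw [if_pos h, if_pos h,
              Finset.sum_ite_eq' Finset.univ y₂ (fun z₂ => p (u₁, u₂, z₁, z₂)),
              if_pos (Finset.mem_univ y₂)]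
          · rw [if_neg h, if_neg h]
        simp only [hz]
        rw [Finset.sum_ite_eq' Finset.univ y₁ (fun z₁ => p (u₁, u₂, z₁, y₂)),
          if_pos (Finset.mem_univ y₁), hp]
      · rw [if_neg hc]
        refine Finset.sum_eq_zero fun z₁ _ => Finset.sum_eq_zero fun z₂ _ => ?_
        exact if_neg (fun h => hc h.1)
    simp only [step1]
    rw [Finset.sum_comm]
    have step2 : ∀ u₂ : G,
        (∑ u₁ : G, if u₁ + u₂ = x₁ ∧ u₂ = x₂
          then 1 / (Fintype.card G : ℝ) ^ 2 * W (u₁ + u₂) y₁ * W u₂ y₂ else 0) =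
        (if u₂ = x₂ then 1 / (Fintype.card G : ℝ) ^ 2 * W x₁ y₁ * W u₂ y₂ else 0) := by
      intro u₂
      by_cases hv : u₂ = x₂
      · simp only [hv, and_true, if_true]
        rw [show (∑ u₁ : G, if u₁ + x₂ = x₁
              then 1 / (Fintype.card G : ℝ) ^ 2 * W (u₁ + x₂) y₁ * W x₂ y₂ else 0) =
            ∑ w : G, if w = x₁
              then 1 / (Fintype.card G : ℝ) ^ 2 * W w y₁ * W x₂ y₂ else 0 from
          Equiv.sum_comp (Equiv.addRight x₂) (fun w =>
            if w = x₁ then 1 / (Fintype.card G : ℝ) ^ 2 * W w y₁ * W x₂ y₂ else 0)]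
        rw [Finset.sum_ite_eq' Finset.univ x₁
          (fun w => 1 / (Fintype.card G : ℝ) ^ 2 * W w y₁ * W x₂ y₂),
          if_pos (Finset.mem_univ x₁)]
      · simp only [hv, and_false, if_false]
        exact Finset.sum_eq_zero fun u₁ _ => rfl
    simp only [step2]
    rw [Finset.sum_ite_eq' Finset.univ x₂
      (fun u₂ => 1 / (Fintype.card G : ℝ) ^ 2 * W x₁ y₁ * W u₂ y₂),
      if_pos (Finset.mem_univ x₂)]
    rw [hQsq]
    ring

  have hrW0 : ∀ (x : G) (y : Y), 0 ≤ 1 / (Fintype.card G : ℝ) * W x y :=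
    fun x y => mul_nonneg (by positivity) (hW0 x y)
  have hrW1 : ∑ x : G, ∑ y : Y, 1 / (Fintype.card G : ℝ) * W x y = 1 := by
    have h1 : ∀ x : G, (∑ y : Y, 1 / (Fintype.card G : ℝ) * W x y) =
        1 / (Fintype.card G : ℝ) := by
      intro x; rw [← Finset.mul_sum, hW1, mul_one]
    simp only [h1]
    rw [Finset.sum_const, Finset.card_univ, nsmul_eq_mul]
    field_simp
  -- injectivity helpers
  have hinjQ : Function.Injective (fun x : (G ⧸ H) × (G ⧸ H) => (x.1 + x.2, x.2)) := by
    intro x y h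
    simp only [Prod.mk.injEq] at h
    obtain ⟨h1, h2⟩ := h
    rw [h2] at h1
    exact Prod.ext_iff.mpr ⟨add_right_cancel h1, h2⟩
  have hinjG : Function.Injective (fun x : G × G => (x.1 + x.2, x.2)) := by
    intro x y h
    simp only [Prod.mk.injEq] at h
    obtain ⟨h1, h2⟩ := h
    rw [h2] at h1
    exact Prod.ext_iff.mpr ⟨add_right_cancel h1, h2⟩
  have hinjT : Function.Injective (fun t : Y × Y × G => (t.2.2, (t.1, t.2.1))) := by
    intro x y h
    simp only [Prod.mk.injEq] at h
    exact Prod.ext_iff.mpr ⟨h.2.1, Prod.ext_iff.mpr ⟨h.2.2, h.1⟩⟩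
  -- ===== statement 1 =====
  have d1 : mutInfo p (fun ω => (QuotientAddGroup.mk ω.2.1 : G ⧸ H))
        (fun ω => ((QuotientAddGroup.mk ω.1 : G ⧸ H), (ω.2.2.1, ω.2.2.2))) ≤
      mutInfo p (fun ω => (QuotientAddGroup.mk ω.2.1 : G ⧸ H))
        (fun ω => (ω.2.2.1, ω.2.2.2, ω.1)) :=
    ITAux.mutInfo_comp_le p hp0 (fun ω => (QuotientAddGroup.mk ω.2.1 : G ⧸ H))
      (fun ω => (ω.2.2.1, ω.2.2.2, ω.1))
      (fun t => ((QuotientAddGroup.mk t.2.2 : G ⧸ H), (t.1, t.2.1)))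
  have d2 : mutInfo p (fun ω => (QuotientAddGroup.mk ω.2.1 : G ⧸ H))
        (fun ω => ((QuotientAddGroup.mk ω.1 : G ⧸ H), (ω.2.2.1, ω.2.2.2))) =
      mutInfo p (fun ω => (QuotientAddGroup.mk ω.2.1 : G ⧸ H))
          (fun ω => (QuotientAddGroup.mk ω.1 : G ⧸ H)) +
        condMutInfo p (fun ω => (QuotientAddGroup.mk ω.2.1 : G ⧸ H))
          (fun ω => (ω.2.2.1, ω.2.2.2)) (fun ω => (QuotientAddGroup.mk ω.1 : G ⧸ H)) :=
    ITAux.chain2 p hp0 (fun ω => (QuotientAddGroup.mk ω.2.1 : G ⧸ H))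
      (fun ω => (QuotientAddGroup.mk ω.1 : G ⧸ H)) (fun ω => (ω.2.2.1, ω.2.2.2))
  have d3 : 0 ≤ mutInfo p (fun ω => (QuotientAddGroup.mk ω.2.1 : G ⧸ H))
      (fun ω => (QuotientAddGroup.mk ω.1 : G ⧸ H)) :=
    ITAux.mutInfo_nonneg p hp0 hp1 _ _
  have d4 : mutInfo p (fun ω => ((QuotientAddGroup.mk ω.1 : G ⧸ H),
        (QuotientAddGroup.mk ω.2.1 : G ⧸ H))) (fun ω => (ω.2.2.1, ω.2.2.2)) =
      mutInfo p (fun ω => (QuotientAddGroup.mk ω.1 : G ⧸ H))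
          (fun ω => (ω.2.2.1, ω.2.2.2)) +
        condMutInfo p (fun ω => (QuotientAddGroup.mk ω.2.1 : G ⧸ H))
          (fun ω => (ω.2.2.1, ω.2.2.2)) (fun ω => (QuotientAddGroup.mk ω.1 : G ⧸ H)) :=
    ITAux.chain p hp0 (fun ω => (QuotientAddGroup.mk ω.1 : G ⧸ H))
      (fun ω => (QuotientAddGroup.mk ω.2.1 : G ⧸ H)) (fun ω => (ω.2.2.1, ω.2.2.2))
  have d5 : mutInfo p (fun ω => ((QuotientAddGroup.mk (ω.1 + ω.2.1) : G ⧸ H),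
        (QuotientAddGroup.mk ω.2.1 : G ⧸ H))) (fun ω => (ω.2.2.1, ω.2.2.2)) =
      mutInfo p (fun ω => ((QuotientAddGroup.mk ω.1 : G ⧸ H),
        (QuotientAddGroup.mk ω.2.1 : G ⧸ H))) (fun ω => (ω.2.2.1, ω.2.2.2)) :=
    ITAux.mutInfo_comp_inj p (fun ω => ((QuotientAddGroup.mk ω.1 : G ⧸ H),
      (QuotientAddGroup.mk ω.2.1 : G ⧸ H))) (fun ω => (ω.2.2.1, ω.2.2.2))
      (fun x => (x.1 + x.2, x.2)) hinjQ
  have d6 : mutInfo p (fun ω => ((QuotientAddGroup.mk (ω.1 + ω.2.1) : G ⧸ H),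
        (QuotientAddGroup.mk ω.2.1 : G ⧸ H))) (fun ω => (ω.2.2.1, ω.2.2.2)) =
      2 * mutInfo p (fun ω => (QuotientAddGroup.mk (ω.1 + ω.2.1) : G ⧸ H))
        (fun ω => ω.2.2.1) := by
    rw [ITAux.mutInfo_eq_D p (fun ω => ((QuotientAddGroup.mk (ω.1 + ω.2.1) : G ⧸ H),
        (QuotientAddGroup.mk ω.2.1 : G ⧸ H))) (fun ω => (ω.2.2.1, ω.2.2.2)),
      ITAux.mutInfo_eq_D p (fun ω => (QuotientAddGroup.mk (ω.1 + ω.2.1) : G ⧸ H))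
        (fun ω => ω.2.2.1)]
    rw [show (fun a b => ITAux.m2 p
          (fun ω => ((QuotientAddGroup.mk (ω.1 + ω.2.1) : G ⧸ H),
            (QuotientAddGroup.mk ω.2.1 : G ⧸ H)))
          (fun ω => (ω.2.2.1, ω.2.2.2)) a b) =
        (fun (a : (G ⧸ H) × (G ⧸ H)) (b : Y × Y) => r a.1 b.1 * r a.2 b.2) from
      funext fun a => funext fun b => Ib a b]
    rw [show (fun a b => ITAux.m2 p
          (fun ω => (QuotientAddGroup.mk (ω.1 + ω.2.1) : G ⧸ H))
          (fun ω => ω.2.2.1) a b) = r from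
      funext fun s => funext fun y => Ia s y]
    rw [ITAux.mutInfoD_tensor r r hr0 hr0 hr1 hr1]
    ring
  have main1 : mutInfo p (fun ω => (QuotientAddGroup.mk ω.1 : G ⧸ H))
        (fun ω => (ω.2.2.1, ω.2.2.2)) +
      mutInfo p (fun ω => (QuotientAddGroup.mk ω.2.1 : G ⧸ H))
        (fun ω => (ω.2.2.1, ω.2.2.2, ω.1)) ≥
      2 * mutInfo p (fun ω => (QuotientAddGroup.mk (ω.1 + ω.2.1) : G ⧸ H))
        (fun ω => ω.2.2.1) := by linarith [d1, d2, d3, d4, d5, d6]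
  refine ⟨main1, ?_⟩
  -- ===== statement 2 =====
  have g1 : condMutInfo p (fun ω => ω.1) (fun ω => (ω.2.2.1, ω.2.2.2))
        (fun ω => (QuotientAddGroup.mk ω.1 : G ⧸ H)) =
      mutInfo p (fun ω => ω.1) (fun ω => (ω.2.2.1, ω.2.2.2)) -
        mutInfo p (fun ω => (QuotientAddGroup.mk ω.1 : G ⧸ H))
          (fun ω => (ω.2.2.1, ω.2.2.2)) :=
    ITAux.condMutInfo_quot p hp0 (fun ω => ω.1) (fun ω => (ω.2.2.1, ω.2.2.2))
      (fun u => (QuotientAddGroup.mk u : G ⧸ H))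
  have g2 : condMutInfo p (fun ω => ω.2.1) (fun ω => (ω.2.2.1, ω.2.2.2, ω.1))
        (fun ω => (QuotientAddGroup.mk ω.2.1 : G ⧸ H)) =
      mutInfo p (fun ω => ω.2.1) (fun ω => (ω.2.2.1, ω.2.2.2, ω.1)) -
        mutInfo p (fun ω => (QuotientAddGroup.mk ω.2.1 : G ⧸ H))
          (fun ω => (ω.2.2.1, ω.2.2.2, ω.1)) :=
    ITAux.condMutInfo_quot p hp0 (fun ω => ω.2.1) (fun ω => (ω.2.2.1, ω.2.2.2, ω.1))
      (fun u => (QuotientAddGroup.mk u : G ⧸ H))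
  have g3 : condMutInfo p (fun ω => ω.1 + ω.2.1) (fun ω => ω.2.2.1)
        (fun ω => (QuotientAddGroup.mk (ω.1 + ω.2.1) : G ⧸ H)) =
      mutInfo p (fun ω => ω.1 + ω.2.1) (fun ω => ω.2.2.1) -
        mutInfo p (fun ω => (QuotientAddGroup.mk (ω.1 + ω.2.1) : G ⧸ H))
          (fun ω => ω.2.2.1) :=
    ITAux.condMutInfo_quot p hp0 (fun ω => ω.1 + ω.2.1) (fun ω => ω.2.2.1)
      (fun u => (QuotientAddGroup.mk u : G ⧸ H))
  have g4 : mutInfo p (fun ω => ω.2.1) (fun ω => (ω.1, (ω.2.2.1, ω.2.2.2))) =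
      mutInfo p (fun ω => ω.2.1) (fun ω => (ω.2.2.1, ω.2.2.2, ω.1)) :=
    ITAux.mutInfo_comp_inj_right p (fun ω => ω.2.1) (fun ω => (ω.2.2.1, ω.2.2.2, ω.1))
      (fun t => (t.2.2, (t.1, t.2.1))) hinjT
  have g5 : mutInfo p (fun ω => ω.2.1) (fun ω => (ω.1, (ω.2.2.1, ω.2.2.2))) =
      mutInfo p (fun ω => ω.2.1) (fun ω => ω.1) +
        condMutInfo p (fun ω => ω.2.1) (fun ω => (ω.2.2.1, ω.2.2.2)) (fun ω => ω.1) :=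
    ITAux.chain2 p hp0 (fun ω => ω.2.1) (fun ω => ω.1) (fun ω => (ω.2.2.1, ω.2.2.2))
  have g6 : mutInfo p (fun ω => ω.2.1) (fun ω => ω.1) = 0 := by
    rw [ITAux.mutInfo_eq_D p (fun ω => ω.2.1) (fun ω => ω.1)]
    rw [show (fun a b => ITAux.m2 p (fun ω => ω.2.1) (fun ω => ω.1) a b) =
        (fun (_ : G) (_ : G) => 1 / (Fintype.card G : ℝ) ^ 2) from
      funext fun a => funext fun b => Ic a b]
    unfold ITAux.mutInfoD
    simp only [Finset.sum_const, Finset.card_univ, nsmul_eq_mul]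
    have harg : (1 / (Fintype.card G : ℝ) ^ 2) /
        (((Fintype.card G : ℝ) * (1 / (Fintype.card G : ℝ) ^ 2)) *
          ((Fintype.card G : ℝ) * (1 / (Fintype.card G : ℝ) ^ 2))) = 1 := by
      field_simp
    rw [harg, Real.logb_one]
    ring
  have g7 : mutInfo p (fun ω => (ω.1, ω.2.1)) (fun ω => (ω.2.2.1, ω.2.2.2)) =
      mutInfo p (fun ω => ω.1) (fun ω => (ω.2.2.1, ω.2.2.2)) +
        condMutInfo p (fun ω => ω.2.1) (fun ω => (ω.2.2.1, ω.2.2.2)) (fun ω => ω.1) :=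
    ITAux.chain p hp0 (fun ω => ω.1) (fun ω => ω.2.1) (fun ω => (ω.2.2.1, ω.2.2.2))
  have g8 : mutInfo p (fun ω => (ω.1 + ω.2.1, ω.2.1)) (fun ω => (ω.2.2.1, ω.2.2.2)) =
      mutInfo p (fun ω => (ω.1, ω.2.1)) (fun ω => (ω.2.2.1, ω.2.2.2)) :=
    ITAux.mutInfo_comp_inj p (fun ω => (ω.1, ω.2.1)) (fun ω => (ω.2.2.1, ω.2.2.2))
      (fun x => (x.1 + x.2, x.2)) hinjG
  have g9 : mutInfo p (fun ω => (ω.1 + ω.2.1, ω.2.1)) (fun ω => (ω.2.2.1, ω.2.2.2)) =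
      2 * mutInfo p (fun ω => ω.1 + ω.2.1) (fun ω => ω.2.2.1) := by
    rw [ITAux.mutInfo_eq_D p (fun ω => (ω.1 + ω.2.1, ω.2.1))
        (fun ω => (ω.2.2.1, ω.2.2.2)),
      ITAux.mutInfo_eq_D p (fun ω => ω.1 + ω.2.1) (fun ω => ω.2.2.1)]
    rw [show (fun a b => ITAux.m2 p (fun ω => (ω.1 + ω.2.1, ω.2.1))
          (fun ω => (ω.2.2.1, ω.2.2.2)) a b) =
        (fun (a : G × G) (b : Y × Y) =>
          (1 / (Fintype.card G : ℝ) * W a.1 b.1) *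
            (1 / (Fintype.card G : ℝ) * W a.2 b.2)) from
      funext fun a => funext fun b => Id a b]
    rw [show (fun a b => ITAux.m2 p (fun ω => ω.1 + ω.2.1) (fun ω => ω.2.2.1) a b) =
        (fun (x : G) (y : Y) => 1 / (Fintype.card G : ℝ) * W x y) from
      funext fun x => funext fun y => Ie x y]
    rw [ITAux.mutInfoD_tensor (fun (x : G) (y : Y) => 1 / (Fintype.card G : ℝ) * W x y)
      (fun (x : G) (y : Y) => 1 / (Fintype.card G : ℝ) * W x y) hrW0 hrW0 hrW1 hrW1]
    ring
  linarith [main1, g1, g2, g3, g4, g5, g6, g7, g8, g9]
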